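/- Let D = {z ∈ ℂ : |z| ≤ r} with r > 0 sufficiently small, and set X₁ = {(z, z̄/(1+z̄)) : z ∈ D} and X₂ = {(−z, z̄/(1+z̄)) : z ∈ D}, compact subsets of ℂ². Then P(X₁) = C(X₁) and P(X₂) = C(X₂); that is, every continuous complex-valued function on Xᵢ is a uniform limit on Xᵢ of polynomials in the two complex coordinates. -/

import Mathlib

open Complex MvPolynomial Metric

noncomputable section

/-- `P(K) = C(K)` for `K ⊆ ℂ²` (with `ℂ²` realized as `Fin 2 → ℂ`): every continuous
function on `K` is a uniform limit on `K` of polynomials in the two coordinates. -/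
def PolyEqC (K : Set (Fin 2 → ℂ)) : Prop :=
  ∀ f : (Fin 2 → ℂ) → ℂ, ContinuousOn f K → ∀ ε : ℝ, 0 < ε →
    ∃ P : MvPolynomial (Fin 2) ℂ, ∀ x ∈ K, ‖f x - eval x P‖ < ε

namespace Stmt7Aux

variable (K : Set (Fin 2 → ℂ))

/-- The coordinate functions on `K` as continuous maps. -/
def coordCM (i : Fin 2) : C(K, ℂ) :=
  ⟨fun x => (x : Fin 2 → ℂ) i, (continuous_apply i).comp continuous_subtype_val⟩

/-- The algebra of (restrictions of) polynomial functions on `K`. -/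
def polyAlg : Subalgebra ℂ C(K, ℂ) := (MvPolynomial.aeval (coordCM K)).range

lemma coord_mem (i : Fin 2) : coordCM K i ∈ polyAlg K :=
  ⟨X i, by simp⟩

/-- Point evaluation as an algebra homomorphism. -/
def evAlg (x : K) : C(K, ℂ) →ₐ[ℂ] ℂ where
  toFun g := g x
  map_one' := rfl
  map_mul' _ _ := rfl
  map_zero' := rfl
  map_add' _ _ := rfl
  commutes' _ := rfl

/-- Stone–Weierstrass: if the conjugates of the coordinate functions are uniform limits of
polynomials on a compact set `K`, then `P(K) = C(K)`. -/
lemma key (hK : IsCompact K)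
    (h : ∀ i, star (coordCM K i) ∈ closure ((polyAlg K : Set C(K, ℂ)))) :
    PolyEqC K := by
  intro f hf ε hε
  haveI : CompactSpace K := isCompact_iff_compactSpace.mp hK
  set B := StarAlgebra.adjoin ℂ (Set.range (coordCM K)) with hB
  have hsep : B.SeparatesPoints := by
    intro x y hxy
    have : (x : Fin 2 → ℂ) ≠ y := fun hxv => hxy (Subtype.ext hxv)
    obtain ⟨i, hi⟩ := Function.ne_iff.mp this
    exact ⟨_, ⟨coordCM K i, StarAlgebra.subset_adjoin ℂ _ ⟨i, rfl⟩, rfl⟩, hi⟩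
  have htop : B.topologicalClosure = ⊤ :=
    ContinuousMap.starSubalgebra_topologicalClosure_eq_top_of_separatesPoints B hsep
  have hBle : (B : Set C(K, ℂ)) ⊆ closure ((polyAlg K : Set C(K, ℂ))) := by
    have h1 : B.toSubalgebra ≤ (polyAlg K).topologicalClosure := by
      rw [StarAlgebra.adjoin_toSubalgebra]
      apply Algebra.adjoin_le
      rintro g (⟨i, rfl⟩ | hg)
      · exact (polyAlg K).le_topologicalClosure (coord_mem K i)
      · rw [Set.mem_star] at hg
        obtain ⟨i, hi⟩ := hg
        have : g = star (coordCM K i) := by rw [hi, star_star]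
        rw [this]; exact h i
    exact fun g hg => h1 hg
  let fr : C(K, ℂ) := ⟨K.restrict f, hf.restrict⟩
  have hfr : fr ∈ closure ((polyAlg K : Set C(K, ℂ))) := by
    have : fr ∈ B.topologicalClosure := htop ▸ StarSubalgebra.mem_top
    exact closure_minimal hBle isClosed_closure this
  obtain ⟨g, hg, hdist⟩ := Metric.mem_closure_iff.mp hfr ε hε
  obtain ⟨P, rfl⟩ := hg
  refine ⟨P, fun x hx => ?_⟩
  have hgx : (aeval (coordCM K) P) ⟨x, hx⟩ = eval x P := by
    have := MvPolynomial.comp_aeval_apply (f := coordCM K) (evAlg K ⟨x, hx⟩) P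
    rw [show (evAlg K ⟨x, hx⟩) (aeval (coordCM K) P) = (aeval (coordCM K) P) ⟨x, hx⟩ from rfl]
      at this
    rw [this]
    have hx' : (fun i => (evAlg K ⟨x, hx⟩) (coordCM K i)) = x := rfl
    rw [hx', aeval_def, Algebra.algebraMap_self]
    rfl
  calc ‖f x - eval x P‖ = dist (fr ⟨x, hx⟩) ((aeval (coordCM K) P) ⟨x, hx⟩) := by
        rw [hgx]; simp [dist_eq_norm, fr]; rfl
    _ ≤ dist fr (aeval (coordCM K) P) := ContinuousMap.dist_apply_le_dist _
    _ < ε := hdist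

lemma hden (c : ℂ) (hc : ‖c‖ ≤ 1/4) : (3/4:ℝ) ≤ ‖1 + c‖ := by
  have h := norm_sub_norm_le (1:ℂ) (-c)
  rw [sub_neg_eq_add, norm_neg, norm_one] at h
  linarith

lemma hne_ (c : ℂ) (hc : ‖c‖ ≤ 1/4) : (1:ℂ) + c ≠ 0 := by
  intro h0
  have := hden c hc
  rw [h0, norm_zero] at this
  linarith

lemma geomA (c : ℂ) (h : (1:ℂ) + c ≠ 0) (N : ℕ) :
    c - ∑ n ∈ Finset.range N, (c / (1 + c)) ^ (n + 1) = c * (c / (1 + c)) ^ N := by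
  induction N with
  | zero => simp
  | succ N ih =>
    rw [Finset.sum_range_succ, ← sub_sub, ih]
    have hcw : c - c / (1 + c) = c * (c / (1 + c)) := by field_simp; ring
    calc c * (c / (1 + c)) ^ N - (c / (1 + c)) ^ (N + 1)
        = (c / (1 + c)) ^ N * (c - c / (1 + c)) := by ring
      _ = c * (c / (1 + c)) ^ (N + 1) := by rw [hcw]; ring

lemma geomB (z : ℂ) (h : (1:ℂ) + z ≠ 0) (N : ℕ) :
    z / (1 + z) - ∑ n ∈ Finset.range N, (-1:ℂ) ^ n * z ^ (n + 1)
      = (-1) ^ N * z ^ (N + 1) / (1 + z) := by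
  induction N with
  | zero => simp
  | succ N ih =>
    rw [Finset.sum_range_succ, ← sub_sub, ih]
    field_simp
    ring

lemma compactK (s : ℂ) (r : ℝ) (hr : r ≤ 1/4) :
    IsCompact ((fun z : ℂ => ![s * z, (starRingEnd ℂ) z / (1 + (starRingEnd ℂ) z)]) ''
      closedBall (0 : ℂ) r) := by
  apply (isCompact_closedBall (0:ℂ) r).image_of_continuousOn
  apply continuousOn_pi.mpr
  intro i
  fin_cases i
  · simpa using (continuous_mul_left s).continuousOn
  · simp only [Matrix.cons_val_one, Matrix.head_cons]
    apply ContinuousOn.div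
    · exact (continuous_conj).continuousOn
    · exact (continuous_const.add continuous_conj).continuousOn
    · intro z hz
      apply hne_
      rw [RingHomIsometric.norm_map]
      simpa [dist_eq_norm] using (mem_closedBall.mp hz).trans hr

section Sign

variable {r : ℝ} {s : ℂ}

lemma starCoord0_mem (hs : s = 1 ∨ s = -1) (hr : r ≤ 1/4)
    (K : Set (Fin 2 → ℂ))
    (hKdef : K = (fun z : ℂ => ![s * z, (starRingEnd ℂ) z / (1 + (starRingEnd ℂ) z)]) ''
      closedBall (0 : ℂ) r)
    (hK : IsCompact K) :
    star (coordCM K 0) ∈ closure ((polyAlg K : Set C(K, ℂ))) := by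
  haveI : CompactSpace K := isCompact_iff_compactSpace.mp hK
  have hs1 : ‖s‖ = 1 := by rcases hs with h | h <;> simp [h]
  have hsc : (starRingEnd ℂ) s = s := by rcases hs with h | h <;> simp [h]
  rw [Metric.mem_closure_iff]
  intro ε hε
  obtain ⟨N, hN⟩ := exists_pow_lt_of_lt_one hε (by norm_num : (1/3:ℝ) < 1)
  refine ⟨(s • ∑ n ∈ Finset.range N, (coordCM K 1) ^ (n + 1) : C(K, ℂ)), ?_, ?_⟩
  · exact Subalgebra.smul_mem _ (Subalgebra.sum_mem _ fun n _ =>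
      Subalgebra.pow_mem _ (coord_mem K 1) _) _
  · rw [ContinuousMap.dist_lt_iff hε]
    intro x
    have hx2 : (x : Fin 2 → ℂ) ∈ ((fun z : ℂ =>
        ![s * z, (starRingEnd ℂ) z / (1 + (starRingEnd ℂ) z)]) '' closedBall (0:ℂ) r) := by
      rw [← hKdef]; exact x.2
    obtain ⟨z, hz, hzx⟩ := hx2
    have hc : ‖(starRingEnd ℂ) z‖ ≤ 1/4 := by
      rw [RingHomIsometric.norm_map]
      simpa [dist_eq_norm] using (mem_closedBall.mp hz).trans hr
    set c := (starRingEnd ℂ) z with hcdef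
    have h1c := hne_ c hc
    have hx0 : (x : Fin 2 → ℂ) 0 = s * z := by rw [← hzx]; simp
    have hx1 : (x : Fin 2 → ℂ) 1 = c / (1 + c) := by rw [← hzx]; simp [hcdef]
    have hw : ‖c / (1 + c)‖ ≤ 1/3 := by
      rw [norm_div]
      have h34 := hden c hc
      rw [div_le_iff₀ (by linarith)]
      nlinarith
    have lhs : (star (coordCM K 0)) x = s * c := by
      simp [coordCM, hx0, map_mul, hsc, hcdef]
    have rhs : (s • ∑ n ∈ Finset.range N, (coordCM K 1) ^ (n + 1) : C(K, ℂ)) x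
        = s * ∑ n ∈ Finset.range N, (c / (1 + c)) ^ (n + 1) := by
      simp [coordCM, hx1, smul_eq_mul]
    rw [dist_eq_norm, lhs, rhs, ← mul_sub, norm_mul, hs1, one_mul, geomA c h1c N,
      norm_mul, norm_pow]
    calc ‖c‖ * ‖c / (1 + c)‖ ^ N ≤ 1 * (1/3:ℝ) ^ N := by
          apply mul_le_mul (by linarith) (pow_le_pow_left₀ (norm_nonneg _) hw N)
            (by positivity) (by norm_num)
      _ < ε := by rw [one_mul]; exact hN

lemma starCoord1_mem (hs : s = 1 ∨ s = -1) (hr : r ≤ 1/4)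
    (K : Set (Fin 2 → ℂ))
    (hKdef : K = (fun z : ℂ => ![s * z, (starRingEnd ℂ) z / (1 + (starRingEnd ℂ) z)]) ''
      closedBall (0 : ℂ) r)
    (hK : IsCompact K) :
    star (coordCM K 1) ∈ closure ((polyAlg K : Set C(K, ℂ))) := by
  haveI : CompactSpace K := isCompact_iff_compactSpace.mp hK
  have hss : ∀ zz : ℂ, s * (s * zz) = zz := fun zz => by rcases hs with h | h <;> rw [h] <;> ring
  rw [Metric.mem_closure_iff]
  intro ε hε
  obtain ⟨N, hN⟩ := exists_pow_lt_of_lt_one hε (by norm_num : (1/3:ℝ) < 1)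
  refine ⟨(∑ n ∈ Finset.range N, (-1:ℂ) ^ n • (s • coordCM K 0) ^ (n + 1) : C(K, ℂ)), ?_, ?_⟩
  · exact Subalgebra.sum_mem _ fun n _ => Subalgebra.smul_mem _
      (Subalgebra.pow_mem _ (Subalgebra.smul_mem _ (coord_mem K 0) _) _) _
  · rw [ContinuousMap.dist_lt_iff hε]
    intro x
    have hx2 : (x : Fin 2 → ℂ) ∈ ((fun z : ℂ =>
        ![s * z, (starRingEnd ℂ) z / (1 + (starRingEnd ℂ) z)]) '' closedBall (0:ℂ) r) := by
      rw [← hKdef]; exact x.2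
    obtain ⟨z, hz, hzx⟩ := hx2
    have hz4 : ‖z‖ ≤ 1/4 := by
      simpa [dist_eq_norm] using (mem_closedBall.mp hz).trans hr
    have h1z := hne_ z hz4
    have hx0 : (x : Fin 2 → ℂ) 0 = s * z := by rw [← hzx]; simp
    have hx1 : (x : Fin 2 → ℂ) 1 = (starRingEnd ℂ) z / (1 + (starRingEnd ℂ) z) := by
      rw [← hzx]; simp
    have lhs : (star (coordCM K 1)) x = z / (1 + z) := by
      simp [coordCM, hx1, map_div₀, map_add, map_one]
    have rhs : (∑ n ∈ Finset.range N, (-1:ℂ) ^ n • (s • coordCM K 0) ^ (n + 1) : C(K, ℂ)) x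
        = ∑ n ∈ Finset.range N, (-1:ℂ) ^ n * z ^ (n + 1) := by
      simp [coordCM, hx0, smul_eq_mul, hss]
    rw [dist_eq_norm, lhs, rhs, geomB z h1z N, norm_div, norm_mul, norm_pow, norm_pow,
      norm_neg, norm_one, one_pow, one_mul]
    calc ‖z‖ ^ (N+1) / ‖1 + z‖ ≤ (1/4:ℝ) ^ (N+1) / (3/4) := by
          apply div_le_div₀ (by positivity) (pow_le_pow_left₀ (norm_nonneg _) hz4 _)
            (by norm_num) (hden z hz4)
      _ ≤ (1/3:ℝ) ^ N := by
          have hppow : (1/4:ℝ) ^ N ≤ (1/3) ^ N := pow_le_pow_left₀ (by norm_num) (by norm_num) N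
          rw [pow_succ]
          nlinarith [pow_nonneg (by norm_num : (0:ℝ) ≤ 1/4) N]
      _ < ε := hN

lemma keySign (hs : s = 1 ∨ s = -1) (hr : r ≤ 1/4) :
    PolyEqC ((fun z : ℂ => ![s * z, (starRingEnd ℂ) z / (1 + (starRingEnd ℂ) z)]) ''
      closedBall (0 : ℂ) r) := by
  set K := (fun z : ℂ => ![s * z, (starRingEnd ℂ) z / (1 + (starRingEnd ℂ) z)]) ''
      closedBall (0 : ℂ) r with hKdef
  have hK : IsCompact K := compactK s r hr
  apply key K hK
  intro i
  fin_cases i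
  · exact starCoord0_mem hs hr K hKdef hK
  · exact starCoord1_mem hs hr K hKdef hK

end Sign
end Stmt7Aux

/-- For `D` a sufficiently small closed disk centered at the origin and
`X₁ = {(z, z̄/(1+z̄)) : z ∈ D}`, `X₂ = {(−z, z̄/(1+z̄)) : z ∈ D}`, one has
`P(X₁) = C(X₁)` and `P(X₂) = C(X₂)`. -/
theorem stmt7 :
    ∃ r₀ : ℝ, 0 < r₀ ∧ ∀ r : ℝ, 0 < r → r ≤ r₀ →
      PolyEqC ((fun z : ℂ => ![z, (starRingEnd ℂ) z / (1 + (starRingEnd ℂ) z)]) ''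
          closedBall (0 : ℂ) r) ∧
      PolyEqC ((fun z : ℂ => ![-z, (starRingEnd ℂ) z / (1 + (starRingEnd ℂ) z)]) ''
          closedBall (0 : ℂ) r) := by
  refine ⟨1/4, by norm_num, fun r hr0 hr => ⟨?_, ?_⟩⟩
  · have he : (fun z : ℂ => ![z, (starRingEnd ℂ) z / (1 + (starRingEnd ℂ) z)])
        = (fun z : ℂ => ![(1:ℂ) * z, (starRingEnd ℂ) z / (1 + (starRingEnd ℂ) z)]) := by
      funext z; rw [one_mul]
    rw [he]
    exact Stmt7Aux.keySign (Or.inl rfl) hr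
  · have he : (fun z : ℂ => ![-z, (starRingEnd ℂ) z / (1 + (starRingEnd ℂ) z)])
        = (fun z : ℂ => ![(-1:ℂ) * z, (starRingEnd ℂ) z / (1 + (starRingEnd ℂ) z)]) := by
      funext z; rw [neg_one_mul]
    rw [he]
    exact Stmt7Aux.keySign (Or.inr rfl) hr
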